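/- Existence of w_l-normal form: Let N = 2^K, 0 ≤ l ≤ K-1, and g ∈ ℚ[χ]/⟨1+χ+⋯+χ^{N-1}⟩ such that 1+χ^{2^l} does not divide g. Then there exist integers a, u with u odd, b ∈ {0,1,…,2^l-1}, and polynomials v₁, v₂ ∈ ℤ[χ] with v₁(1) odd, such that pr_l(g) = (2^a/u)·((1-χ)^b·v₁(χ) + 2·v₂(χ)) in ℚ[χ]/⟨1+χ^{2^l}⟩. -/

import Mathlib

open Polynomial

lemma dvd_two_of_map_zero' (d : Polynomial ℤ)
    (h : d.map (Int.castRingHom (ZMod 2)) = 0) : (C 2 : Polynomial ℤ) ∣ d := by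
  rw [C_dvd_iff_dvd_coeff]
  intro i
  have h2 : ((d.coeff i : ℤ) : ZMod 2) = 0 := by
    have := congrArg (fun q => Polynomial.coeff q i) h
    simpa [coeff_map] using this
  exact_mod_cast (ZMod.intCast_zmod_eq_zero_iff_dvd _ 2).mp h2

lemma key (m : ℕ) : ∀ n : ℕ, ∀ w : Polynomial ℤ, w ≠ 0 → w.natDegree < m →
    w.leadingCoeff.natAbs ≤ n →
    ∃ (t b : ℕ) (v₁ v₂ c : Polynomial ℤ), b < m ∧ Odd (v₁.eval 1) ∧
      w = 2 ^ t * ((1 - X) ^ b * v₁ + 2 * v₂) + c * (1 + X ^ m) := by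
  intro n
  induction n with
  | zero =>
    intro w hw _ hlc
    exact absurd (leadingCoeff_eq_zero.mp (Int.natAbs_eq_zero.mp (Nat.le_zero.mp hlc))) hw
  | succ n ih =>
    intro w hw hdeg hlc
    by_cases hmap : w.map (Int.castRingHom (ZMod 2)) = 0
    · -- all coefficients even: divide by 2 and recurse
      obtain ⟨w', hw'⟩ := dvd_two_of_map_zero' w hmap
      have hC2 : (C 2 : Polynomial ℤ) ≠ 0 := by
        simp
      have hw'0 : w' ≠ 0 := by rintro rfl; simp at hw'; exact hw hw'
      have hlcw : w.leadingCoeff = 2 * w'.leadingCoeff := by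
        rw [hw', leadingCoeff_mul, leadingCoeff_C]
      have hdeg' : w'.natDegree < m := by
        have : w.natDegree = w'.natDegree := by
          rw [hw', natDegree_mul hC2 hw'0, natDegree_C]; ring
        omega
      have hlc' : w'.leadingCoeff.natAbs ≤ n := by
        have h1 : w.leadingCoeff.natAbs = 2 * w'.leadingCoeff.natAbs := by
          rw [hlcw, Int.natAbs_mul]; rfl
        have h2 : w'.leadingCoeff.natAbs ≠ 0 := by
          simpa [Int.natAbs_eq_zero, leadingCoeff_eq_zero] using hw'0
        omega
      obtain ⟨t, b, v₁, v₂, c, hb, hodd, heq⟩ := ih w' hw'0 hdeg' hlc'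
      refine ⟨t + 1, b, v₁, v₂, 2 * c, hb, hodd, ?_⟩
      have hC2' : (C 2 : Polynomial ℤ) = 2 := by simp [map_ofNat]
      rw [hw', hC2']
      linear_combination (2 : Polynomial ℤ) * heq
    · -- odd part: extract (1-X)^b
      set w₂ := w.map (Int.castRingHom (ZMod 2)) with hw₂def
      set b := rootMultiplicity 1 w₂ with hbdef
      have hdvd : (X - C 1) ^ b ∣ w₂ := pow_rootMultiplicity_dvd _ _
      have hble : b ≤ w₂.natDegree := by
        have h := natDegree_le_of_dvd hdvd hmap
        rwa [natDegree_pow, natDegree_X_sub_C, mul_one] at h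
      have hbm : b < m := lt_of_le_of_lt (hble.trans natDegree_map_le) hdeg
      set s := w₂ /ₘ (X - C 1) ^ b with hsdef
      have hsplit : (X - C 1) ^ b * s = w₂ := pow_mul_divByMonic_rootMultiplicity_eq w₂ 1
      have hs1 : s.eval 1 ≠ 0 := eval_divByMonic_pow_rootMultiplicity_ne_zero 1 hmap
      obtain ⟨v₁, hv₁⟩ := Polynomial.map_surjective (Int.castRingHom (ZMod 2)) (fun x => ZMod.intCast_surjective x) s
      have hodd : Odd (v₁.eval 1) := by
        rcases Int.even_or_odd (v₁.eval 1) with he | ho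
        · exfalso
          apply hs1
          rw [← hv₁, eval_one_map]
          exact (ZMod.intCast_zmod_eq_zero_iff_dvd _ 2).mpr (by exact_mod_cast he.two_dvd)
        · exact ho
      have honeX : (1 - X : Polynomial (ZMod 2)) = X - C 1 := by
        have h2 : (2 : Polynomial (ZMod 2)) = 0 := by
          have h0 : (2 : ZMod 2) = 0 := by decide
          rw [← map_ofNat (C : ZMod 2 →+* Polynomial (ZMod 2)) 2, h0, map_zero]
        rw [C_1]
        linear_combination (1 - X : Polynomial (ZMod 2)) * h2
      have hmapd : (w - (1 - X) ^ b * v₁).map (Int.castRingHom (ZMod 2)) = 0 := by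
        rw [Polynomial.map_sub, Polynomial.map_mul, Polynomial.map_pow, Polynomial.map_sub,
          Polynomial.map_one, map_X, hv₁, honeX, hsplit, ← hw₂def, sub_self]
      obtain ⟨v₂, hv₂⟩ := dvd_two_of_map_zero' _ hmapd
      refine ⟨0, b, v₁, v₂, 0, hbm, hodd, ?_⟩
      have hC2' : (C 2 : Polynomial ℤ) = 2 := by simp [map_ofNat]
      rw [hC2'] at hv₂
      linear_combination hv₂

theorem stmt8' (l : ℕ) (p : Polynomial ℚ)
    (hnz : Ideal.Quotient.mk (Ideal.span {(1 + X ^ (2 ^ l) : Polynomial ℚ)}) p ≠ 0) :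
    ∃ (a u : ℤ) (b : ℕ) (v₁ v₂ : Polynomial ℤ), Odd u ∧ b < 2 ^ l ∧ Odd (v₁.eval 1) ∧
      Ideal.Quotient.mk (Ideal.span {(1 + X ^ (2 ^ l) : Polynomial ℚ)}) p =
        Ideal.Quotient.mk (Ideal.span {(1 + X ^ (2 ^ l) : Polynomial ℚ)})
          (C ((2 : ℚ) ^ a / (u : ℚ)) *
            ((1 - X) ^ b * v₁.map (Int.castRingHom ℚ) + 2 * v₂.map (Int.castRingHom ℚ))) := by
  set m := 2 ^ l with hmdef
  have hm : 0 < m := pow_pos (by norm_num) l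
  set f : Polynomial ℚ := 1 + X ^ m with hfdef
  have hfeq : f = X ^ m + C 1 := by rw [hfdef, C_1, add_comm]
  have hf : f.Monic := by
    rw [hfeq]
    apply monic_X_pow_add
    apply (degree_C_le).trans_lt
    exact_mod_cast WithBot.coe_lt_coe.mpr hm
  have hdegf : f.degree = m := by rw [hfeq]; exact degree_X_pow_add_C hm 1
  set r := p %ₘ f with hrdef
  have hpr : Ideal.Quotient.mk (Ideal.span {f}) p = Ideal.Quotient.mk (Ideal.span {f}) r := by
    rw [Ideal.Quotient.eq, Ideal.mem_span_singleton]
    exact ⟨p /ₘ f, by rw [hrdef, modByMonic_eq_sub_mul_div p f]; ring⟩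
  have hr0 : r ≠ 0 := by
    rintro h
    exact hnz (by rw [hpr, h, map_zero])
  have hdegr : r.natDegree < m := by
    rw [natDegree_lt_iff_degree_lt hr0]
    exact_mod_cast (degree_modByMonic_lt p hf).trans_le hdegf.le
  -- clear denominators
  obtain ⟨nb, hnb⟩ := IsLocalization.integerNormalization_map_to_map (nonZeroDivisors ℤ) r
  set w := IsLocalization.integerNormalization (nonZeroDivisors ℤ) r with hwdef
  set n : ℤ := (nb : ℤ) with hndef
  have hn0 : n ≠ 0 := nonZeroDivisors.coe_ne_zero nb
  have hnq : (n : ℚ) ≠ 0 := Int.cast_ne_zero.mpr hn0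
  have hmapw : w.map (Int.castRingHom ℚ) = C (n : ℚ) * r := by
    rw [← algebraMap_int_eq, hnb, zsmul_eq_mul, ← C_eq_intCast]
  have hw0 : w ≠ 0 := by
    rintro h
    rw [h, Polynomial.map_zero] at hmapw
    exact hr0 ((mul_eq_zero.mp hmapw.symm).resolve_left (by simpa using hnq))
  have hdegw : w.natDegree < m := by
    have h1 : w.natDegree = (w.map (Int.castRingHom ℚ)).natDegree :=
      (natDegree_map_eq_of_injective (by exact_mod_cast Int.cast_injective) w).symm
    rw [h1, hmapw, natDegree_mul (by simpa using hnq) hr0, natDegree_C]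
    simpa using hdegr
  -- decompose n = 2^sn * u with u odd
  obtain ⟨sn, u', hu', hnat⟩ := Nat.exists_eq_pow_mul_and_not_dvd
    (Int.natAbs_ne_zero.mpr hn0) 2 (by norm_num)
  have hu'odd : Odd u' := Nat.odd_iff.mpr (Nat.two_dvd_ne_zero.mp hu')
  obtain ⟨u, huodd, hnu⟩ : ∃ u : ℤ, Odd u ∧ n = 2 ^ sn * u := by
    rcases Int.natAbs_eq n with h | h
    · exact ⟨(u' : ℤ), (Int.odd_coe_nat _).mpr hu'odd, by rw [h, hnat]; push_cast; ring⟩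
    · exact ⟨-(u' : ℤ), ((Int.odd_coe_nat _).mpr hu'odd).neg, by rw [h, hnat]; push_cast; ring⟩
  have hu0 : (u : ℚ) ≠ 0 := by
    have : u ≠ 0 := by rintro rfl; simp at huodd
    exact_mod_cast Int.cast_ne_zero.mpr this
  -- apply the key normal-form lemma over ℤ
  obtain ⟨t, b, v₁, v₂, c, hb, hodd, heq⟩ := key m w.leadingCoeff.natAbs w hw0 hdegw le_rfl
  set a : ℤ := (t : ℤ) - (sn : ℤ) with hadef
  refine ⟨a, u, b, v₁, v₂, huodd, hb, hodd, ?_⟩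
  set S : Polynomial ℚ :=
    (1 - X) ^ b * v₁.map (Int.castRingHom ℚ) + 2 * v₂.map (Int.castRingHom ℚ) with hSdef
  have hmapheq := congrArg (Polynomial.map (Int.castRingHom ℚ)) heq
  simp only [Polynomial.map_add, Polynomial.map_mul, Polynomial.map_pow, Polynomial.map_sub,
    Polynomial.map_one, Polynomial.map_ofNat, Polynomial.map_X] at hmapheq
  rw [hmapw] at hmapheq
  have h2C : (2 : Polynomial ℚ) = C 2 := (map_ofNat (C : ℚ →+* Polynomial ℚ) 2).symm
  have key2 : C (n : ℚ) * r = C ((2 : ℚ) ^ t) * S +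
      (c.map (Int.castRingHom ℚ)) * f := by
    rw [hmapheq, hSdef, hfdef, h2C, ← C_pow]
  have hcoef : (2 : ℚ) ^ a / (u : ℚ) = (n : ℚ)⁻¹ * 2 ^ t := by
    have hnQ : (n : ℚ) = 2 ^ sn * (u : ℚ) := by exact_mod_cast congrArg (Int.cast : ℤ → ℚ) hnu
    have h2a : (2 : ℚ) ^ a = 2 ^ t / 2 ^ sn := by
      rw [hadef, zpow_sub₀ (by norm_num : (2 : ℚ) ≠ 0), zpow_natCast, zpow_natCast]
    rw [h2a, hnQ]
    field_simp
  have hone : C ((n : ℚ)⁻¹) * C ((n : ℚ)) = 1 := by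
    rw [← C_mul, inv_mul_cancel₀ hnq, C_1]
  have hC : C ((2 : ℚ) ^ a / (u : ℚ)) = C ((n : ℚ)⁻¹) * C ((2 : ℚ) ^ t) := by
    rw [← C_mul, hcoef]
  have hmain : r - C ((2 : ℚ) ^ a / (u : ℚ)) * S =
      (C ((n : ℚ)⁻¹) * c.map (Int.castRingHom ℚ)) * f := by
    rw [hC]
    linear_combination C ((n : ℚ)⁻¹) * key2 - r * hone
  rw [hpr, Ideal.Quotient.eq, Ideal.mem_span_singleton]
  exact ⟨C ((n : ℚ)⁻¹) * c.map (Int.castRingHom ℚ), by rw [hmain]; ring⟩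

/-- Existence of the w_l-normal form: if 1+χ^{2^l} does not divide g (represented by the
polynomial p), then there exist a, u (u odd), 0 ≤ b < 2^l and v₁, v₂ ∈ ℤ[χ] with v₁(1) odd
such that pr_l(g) = (2^a/u)·((1-χ)^b·v₁ + 2·v₂). -/
theorem stmt8 (K l : ℕ) (hK : 1 ≤ K) (hl : l ≤ K - 1) (p : Polynomial ℚ)
    (hnz : Ideal.Quotient.mk (Ideal.span {(1 + X ^ (2 ^ l) : Polynomial ℚ)}) p ≠ 0) :
    ∃ (a u : ℤ) (b : ℕ) (v₁ v₂ : Polynomial ℤ), Odd u ∧ b < 2 ^ l ∧ Odd (v₁.eval 1) ∧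
      Ideal.Quotient.mk (Ideal.span {(1 + X ^ (2 ^ l) : Polynomial ℚ)}) p =
        Ideal.Quotient.mk (Ideal.span {(1 + X ^ (2 ^ l) : Polynomial ℚ)})
          (C ((2 : ℚ) ^ a / (u : ℚ)) *
            ((1 - X) ^ b * v₁.map (Int.castRingHom ℚ) + 2 * v₂.map (Int.castRingHom ℚ))) := by
  exact stmt8' l p hnz
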